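/- Let (g, μ, T, B) be a quadratic Hom-Lie algebra over a field of characteristic zero with μ-equivariant T, and let [x,y] := T(μ(x,y)). Then for every x ∈ g the linear map ad_μ(x) := μ(x, ·) : g → g is a derivation of the Lie algebra (g, [·,·]), i.e. ad_μ(x)([y,z]) = [ad_μ(x)(y), z] + [y, ad_μ(x)(z)] for all y, z ∈ g, and ad_μ(x) is anti-self-adjoint with respect to B, i.e. B(ad_μ(x)(y), z) = −B(y, ad_μ(x)(z)) for all y, z ∈ g. -/
import Mathlib


/-- For a quadratic Hom-Lie algebra `(g, μ, T, B)` with `μ`-equivariant `T` and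
`[x,y] := T(μ(x,y))`, each `ad_μ(x) = μ(x,·)` is a derivation of the Lie algebra
`(g, [·,·])` and is anti-self-adjoint with respect to `B`. -/
theorem ad_mu_is_antiselfadjoint_derivation
    {F : Type*} [Field F] [CharZero F]
    {g : Type*} [AddCommGroup g] [Module F g] [FiniteDimensional F g]
    (μ : g →ₗ[F] g →ₗ[F] g) (T : g →ₗ[F] g) (B : g →ₗ[F] g →ₗ[F] F)
    (hskew : ∀ x y : g, μ x y = - μ y x)
    (hjac : ∀ x y z : g, μ (T x) (μ y z) + μ (T y) (μ z x) + μ (T z) (μ x y) = 0)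
    (hequiv : ∀ x y : g, T (μ x y) = μ (T x) y)
    (hBsymm : ∀ x y : g, B x y = B y x)
    (hBnondeg : ∀ x : g, (∀ y : g, B x y = 0) → x = 0)
    (hBinv : ∀ x y z : g, B (μ x y) z = B x (μ y z))
    (hTsa : ∀ x y : g, B (T x) y = B x (T y)) :
    (∀ x y z : g,
      μ x (T (μ y z)) = T (μ (μ x y) z) + T (μ y (μ x z))) ∧
    (∀ x y z : g, B (μ x y) z = - B y (μ x z)) := by
  -- μ(Ta)b = μ a (Tb)
  have h1 : ∀ a b : g, μ (T a) b = μ a (T b) := by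
    intro a b
    calc μ (T a) b = T (μ a b) := (hequiv a b).symm
      _ = T (- μ b a) := by rw [← hskew a b]
      _ = - T (μ b a) := by rw [map_neg]
      _ = - μ (T b) a := by rw [hequiv]
      _ = μ a (T b) := (hskew a (T b)).symm
  have h2 : ∀ x y z : g, B (μ x y) z = - B y (μ x z) := by
    intro x y z
    rw [hskew x y, map_neg, LinearMap.neg_apply, hBinv y x z]
  refine ⟨?_, h2⟩
  intro x y z
  have key : ∀ w : g,
      B (μ x (T (μ y z)) - T (μ (μ x y) z) - T (μ y (μ x z))) w = 0 := by
    intro w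
    have eA : B (μ x (T (μ y z))) w = - B x (μ (T w) (μ y z)) := by
      calc B (μ x (T (μ y z))) w = - B (T (μ y z)) (μ x w) := h2 x _ w
        _ = - B (μ y z) (T (μ x w)) := by rw [hTsa]
        _ = - B (μ y z) (μ x (T w)) := by rw [hequiv, h1]
        _ = - B (μ x (T w)) (μ y z) := by rw [hBsymm]
        _ = - B x (μ (T w) (μ y z)) := by rw [hBinv]
    have eB1 : B (T (μ (μ x y) z)) w = B x (μ (T y) (μ z w)) := by
      calc B (T (μ (μ x y) z)) w = B (μ (μ x y) z) (T w) := hTsa _ _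
        _ = B (μ x y) (μ z (T w)) := hBinv _ _ _
        _ = B (μ x y) (μ (T z) w) := by rw [h1]
        _ = B (μ x y) (T (μ z w)) := by rw [hequiv]
        _ = B (T (μ x y)) (μ z w) := (hTsa _ _).symm
        _ = B (μ (T x) y) (μ z w) := by rw [hequiv]
        _ = B (T x) (μ y (μ z w)) := hBinv _ _ _
        _ = B x (T (μ y (μ z w))) := hTsa _ _
        _ = B x (μ (T y) (μ z w)) := by rw [hequiv]
    have eB2 : B (T (μ y (μ x z))) w = - B x (μ (T z) (μ y w)) := by
      calc B (T (μ y (μ x z))) w = B (μ y (T (μ x z))) w := by rw [hequiv, h1]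
        _ = - B (T (μ x z)) (μ y w) := h2 y _ w
        _ = - B (μ x z) (T (μ y w)) := by rw [hTsa]
        _ = - B (μ x z) (μ y (T w)) := by rw [hequiv, h1]
        _ = - B x (μ z (μ y (T w))) := by rw [hBinv]
        _ = - B x (μ z (T (μ y w))) := by rw [hequiv, h1]
        _ = - B x (μ (T z) (μ y w)) := by rw [← h1]
    have hj : μ (T w) (μ y z) + μ (T y) (μ z w) - μ (T z) (μ y w) = 0 := by
      have h := hjac w y z
      rw [hskew w y, map_neg] at h
      rw [sub_eq_add_neg]; exact h
    have hj' : B x (μ (T w) (μ y z)) + B x (μ (T y) (μ z w))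
        - B x (μ (T z) (μ y w)) = 0 := by
      have : B x (μ (T w) (μ y z) + μ (T y) (μ z w) - μ (T z) (μ y w)) = B x 0 := by
        rw [hj]
      simpa [map_add, map_sub] using this
    rw [map_sub, map_sub, LinearMap.sub_apply, LinearMap.sub_apply, eA, eB1, eB2]
    linear_combination -hj'
  have h0 := hBnondeg _ key
  rw [sub_sub, sub_eq_zero] at h0
  exact h0
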